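/- Let s₁(n, j, m) for 0 ≤ j ≤ n be defined by the polynomial identity ∑_{j=0}^{n} s₁(n, j, m) x^j = (x - m)(x - m + 1)···(x - m + n - 1). Then for any integers j, m with 0 ≤ j, the formal power series identity ∑_{n≥j} s₁(n, j, m)·q^n/n! = (1-q)^m·(-log(1-q))^j / j! holds. -/

import Mathlib

open PowerSeries

/-- Generalized signless Stirling numbers of the first kind, defined by
`∑_{j=0}^n s₁(n,j,m) xʲ = (x-m)(x-m+1)⋯(x-m+n-1)`. -/
noncomputable def s1 (n j : ℕ) (m : ℤ) : ℚ :=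
  (∏ i ∈ Finset.range n, (Polynomial.X - Polynomial.C ((m : ℚ) - i))).coeff j

/-- The formal power series `-log(1-q) = ∑_{n≥1} qⁿ/n` over `ℚ`. -/
noncomputable def negLogOneSub : PowerSeries ℚ :=
  PowerSeries.mk fun n => if n = 0 then 0 else 1 / (n : ℚ)

/-- `∑_{n≥j} s₁(n,j,m) qⁿ/n! = (1-q)^m (-log(1-q))^j / j!` as formal power
series over `ℚ`, where for `m ∈ ℤ` the series `(1-q)^m` is
`(1-q)^(m⁺) · ((1-q)⁻¹)^(m⁻)`.  (Note `s₁(n,j,m) = 0` for `n < j`.) -/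
lemma s1_succ_succ (n j : ℕ) (m : ℤ) :
    s1 (n+1) (j+1) m = s1 n j m + ((n:ℚ) - m) * s1 n (j+1) m := by
  unfold s1
  rw [Finset.prod_range_succ, mul_sub, Polynomial.coeff_sub, Polynomial.coeff_mul_X,
    Polynomial.coeff_mul_C]
  ring

lemma s1_succ_zero (n : ℕ) (m : ℤ) :
    s1 (n+1) 0 m = ((n:ℚ) - m) * s1 n 0 m := by
  unfold s1
  rw [Finset.prod_range_succ, mul_sub, Polynomial.coeff_sub, Polynomial.coeff_mul_C]
  simp [Polynomial.coeff_mul_X_zero]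
  ring

lemma coeff_onesub_mul_zero (f : ℚ⟦X⟧) : coeff 0 ((1-X)*f) = coeff 0 f := by
  rw [sub_mul, one_mul, map_sub, coeff_zero_X_mul, sub_zero]

lemma coeff_onesub_mul_succ (f : ℚ⟦X⟧) (n : ℕ) :
    coeff (n+1) ((1-X)*f) = coeff (n+1) f - coeff n f := by
  rw [sub_mul, one_mul, map_sub, coeff_succ_X_mul]

lemma ode_unique (c : ℚ) (H : ℚ⟦X⟧) (h : (1 - X) * d⁄dX ℚ H = C c * H)
    (h0 : coeff 0 H = 0) : H = 0 := by
  ext n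
  induction n with
  | zero => simpa using h0
  | succ n ih =>
    have hn := congrArg (coeff n) h
    rw [coeff_C_mul] at hn
    cases n with
    | zero =>
      simp only [map_zero]
      rw [coeff_onesub_mul_zero, coeff_derivative, h0, mul_zero] at hn
      simpa using hn
    | succ k =>
      simp only [map_zero] at ih ⊢
      rw [coeff_onesub_mul_succ, coeff_derivative, coeff_derivative, ih] at hn
      have : coeff (k+1+1) H * ((k:ℚ)+1+1) = 0 := by
        push_cast at hn ⊢
        linarith [hn]
      exact mul_eq_zero.mp this |>.resolve_right (by positivity)

lemma onesub_mul_inv : (1 - X : ℚ⟦X⟧) * (1-X)⁻¹ = 1 :=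
  PowerSeries.mul_inv_cancel _ (by simp)

lemma ode_L : (1 - X : ℚ⟦X⟧) * d⁄dX ℚ negLogOneSub = 1 := by
  have h : d⁄dX ℚ negLogOneSub = mk fun _ => (1:ℚ) := by
    ext n
    rw [coeff_derivative, coeff_mk]
    unfold negLogOneSub
    rw [coeff_mk]
    simp [div_mul_eq_mul_div, mul_comm]
    exact mul_inv_cancel₀ (by positivity)
  rw [h]
  ext n
  cases n with
  | zero => simp [coeff_onesub_mul_zero]
  | succ n => simp [coeff_onesub_mul_succ, coeff_one]

lemma ode_pow (f h : ℚ⟦X⟧) (hf : (1-X) * d⁄dX ℚ f = h) (k : ℕ) :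
    (1-X) * d⁄dX ℚ (f^(k+1)) = C ((k:ℚ)+1) * f^k * h := by
  induction k with
  | zero => simpa using hf
  | succ k ih =>
    have hC : C ((k:ℚ)+1+1) = C ((k:ℚ)+1) + 1 := by rw [map_add, map_one]
    rw [pow_succ, Derivation.leibniz, smul_eq_mul, smul_eq_mul]
    push_cast
    rw [hC]
    linear_combination f^(k+1)*hf + f*ih

lemma ode_A (a : ℕ) : (1-X : ℚ⟦X⟧) * d⁄dX ℚ ((1-X)^a) = C (-(a:ℚ)) * (1-X)^a := by
  cases a with
  | zero => simp
  | succ k =>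
    have hf : (1-X:ℚ⟦X⟧) * d⁄dX ℚ (1-X) = -(1-X) := by
      rw [map_sub]; simp
    have := ode_pow (1-X) (-(1-X)) hf k
    rw [this]
    have hC : C (-((k:ℚ)+1)) = -C ((k:ℚ)+1) := by rw [map_neg]
    push_cast
    rw [hC]
    ring

lemma ode_B (b : ℕ) :
    (1-X : ℚ⟦X⟧) * d⁄dX ℚ (((1-X)⁻¹)^b) = C (b:ℚ) * ((1-X)⁻¹)^b := by
  cases b with
  | zero => simp
  | succ k =>
    have hf : (1-X:ℚ⟦X⟧) * d⁄dX ℚ ((1-X)⁻¹) = (1-X)⁻¹ := by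
      have hd : d⁄dX ℚ ((1-X:ℚ⟦X⟧)⁻¹) = ((1-X)⁻¹)^2 := by
        rw [derivative_inv', map_sub, derivative_X, Derivation.map_one_eq_zero]
        ring
      rw [hd]
      linear_combination (1-X:ℚ⟦X⟧)⁻¹ * onesub_mul_inv
    have := ode_pow ((1-X)⁻¹) ((1-X)⁻¹) hf k
    rw [this]
    push_cast
    ring

lemma ode_prod (x y : ℚ⟦X⟧) (cx cy : ℚ) (hx : (1-X) * d⁄dX ℚ x = C cx * x)
    (hy : (1-X) * d⁄dX ℚ y = C cy * y) :
    (1-X) * d⁄dX ℚ (x*y) = C (cx+cy) * (x*y) := by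
  rw [Derivation.leibniz, smul_eq_mul, smul_eq_mul, map_add]
  linear_combination x*hy + y*hx

lemma ode_mul_C (x : ℚ⟦X⟧) (c : ℚ) :
    (1-X) * d⁄dX ℚ (x * C c) = ((1-X) * d⁄dX ℚ x) * C c := by
  rw [Derivation.leibniz, smul_eq_mul, smul_eq_mul, derivative_C, mul_zero, zero_add]
  ring

noncomputable def ABx (m : ℤ) : ℚ⟦X⟧ := (1-X)^m.toNat * ((1-X)⁻¹)^(-m).toNat

lemma ode_AB (m : ℤ) : (1-X) * d⁄dX ℚ (ABx m) = C (-(m:ℚ)) * ABx m := by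
  have h := ode_prod _ _ _ _ (ode_A m.toNat) (ode_B (-m).toNat)
  have key : -((m.toNat:ℚ)) + ((-m).toNat:ℚ) = -(m:ℚ) := by
    have h2 := congrArg (fun z : ℤ => (z:ℚ)) (Int.toNat_sub_toNat_neg m)
    push_cast at h2
    linarith
  rw [key] at h
  exact h

noncomputable def Gx (m : ℤ) (j : ℕ) : ℚ⟦X⟧ :=
  ABx m * negLogOneSub^j * C (1/(j.factorial : ℚ))

lemma ode_G0 (m : ℤ) : (1-X) * d⁄dX ℚ (Gx m 0) = C (-(m:ℚ)) * Gx m 0 := by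
  unfold Gx
  simp only [pow_zero, mul_one, Nat.factorial_zero, Nat.cast_one, one_div_one, map_one]
  exact ode_AB m

lemma ode_Gsucc (m : ℤ) (j : ℕ) :
    (1-X) * d⁄dX ℚ (Gx m (j+1)) = C (-(m:ℚ)) * Gx m (j+1) + Gx m j := by
  have hL := ode_pow negLogOneSub 1 ode_L j
  have hAB := ode_AB m
  have hCC : C (1/(j.factorial:ℚ)) =
      C ((j:ℚ)+1) * C (1/((j+1).factorial:ℚ)) := by
    rw [← map_mul]
    congr 1
    rw [Nat.factorial_succ]
    have h1 : ((j.factorial:ℚ)) ≠ 0 := by positivity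
    have h2 : ((j:ℚ)+1) ≠ 0 := by positivity
    push_cast
    field_simp
  unfold Gx
  rw [ode_mul_C, Derivation.leibniz, smul_eq_mul, smul_eq_mul]
  linear_combination (ABx m * C (1/((j+1).factorial:ℚ))) * hL +
    (negLogOneSub^(j+1) * C (1/((j+1).factorial:ℚ))) * hAB -
    (ABx m * negLogOneSub^j) * hCC

noncomputable def Fx (m : ℤ) (j : ℕ) : ℚ⟦X⟧ :=
  PowerSeries.mk fun n => s1 n j m / (n.factorial : ℚ)

lemma ode_F0 (m : ℤ) : (1-X) * d⁄dX ℚ (Fx m 0) = C (-(m:ℚ)) * Fx m 0 := by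
  ext n
  cases n with
  | zero =>
    rw [coeff_onesub_mul_zero, coeff_derivative, coeff_C_mul]
    simp only [Fx, coeff_mk]
    rw [show (0:ℕ)+1 = 0+1 from rfl, s1_succ_zero]
    simp
  | succ n =>
    rw [coeff_onesub_mul_succ, coeff_derivative, coeff_derivative, coeff_C_mul]
    simp only [Fx, coeff_mk]
    rw [s1_succ_zero (n+1) m, Nat.factorial_succ (n+1)]
    have h1 : (((n+1).factorial : ℚ)) ≠ 0 := by positivity
    push_cast
    field_simp
    ring

lemma ode_Fsucc (m : ℤ) (j : ℕ) :
    (1-X) * d⁄dX ℚ (Fx m (j+1)) = C (-(m:ℚ)) * Fx m (j+1) + Fx m j := by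
  ext n
  cases n with
  | zero =>
    rw [coeff_onesub_mul_zero, coeff_derivative, map_add, coeff_C_mul]
    simp only [Fx, coeff_mk]
    rw [show (0:ℕ)+1 = 0+1 from rfl, s1_succ_succ]
    simp
    ring
  | succ n =>
    rw [coeff_onesub_mul_succ, coeff_derivative, coeff_derivative, map_add, coeff_C_mul]
    simp only [Fx, coeff_mk]
    rw [s1_succ_succ (n+1) j m, Nat.factorial_succ (n+1)]
    have h1 : (((n+1).factorial : ℚ)) ≠ 0 := by positivity
    push_cast
    field_simp
    ring

lemma const_F (m : ℤ) (j : ℕ) : coeff 0 (Fx m j) = if j = 0 then 1 else 0 := by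
  simp only [Fx, coeff_mk, s1, Finset.range_zero, Finset.prod_empty, Polynomial.coeff_one]
  simp [eq_comm]

lemma const_G (m : ℤ) (j : ℕ) : coeff 0 (Gx m j) = if j = 0 then 1 else 0 := by
  rw [coeff_zero_eq_constantCoeff]
  cases j with
  | zero => simp [Gx, ABx, map_mul, map_pow, constantCoeff_inv]
  | succ k => simp [Gx, ABx, negLogOneSub, map_mul, map_pow, constantCoeff_inv, constantCoeff_mk]

lemma FG (m : ℤ) (j : ℕ) : Fx m j = Gx m j := by
  induction j with
  | zero =>
    have h : Fx m 0 - Gx m 0 = 0 := by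
      apply ode_unique (-(m:ℚ))
      · rw [map_sub, mul_sub, ode_F0, ode_G0, mul_sub]
      · rw [map_sub, const_F, const_G, sub_self]
    exact sub_eq_zero.mp h
  | succ k ih =>
    have h : Fx m (k+1) - Gx m (k+1) = 0 := by
      apply ode_unique (-(m:ℚ))
      · rw [map_sub, mul_sub, ode_Fsucc, ode_Gsucc, ih, mul_sub]
        ring
      · rw [map_sub, const_F, const_G, sub_self]
    exact sub_eq_zero.mp h


theorem stmt_12 (j : ℕ) (m : ℤ) :
    (PowerSeries.mk fun n => s1 n j m / (n.factorial : ℚ)) =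
      (1 - PowerSeries.X : PowerSeries ℚ) ^ m.toNat *
        ((1 - PowerSeries.X : PowerSeries ℚ)⁻¹) ^ (-m).toNat *
        negLogOneSub ^ j * PowerSeries.C (1 / (j.factorial : ℚ)) := by
  have h := FG m j
  unfold Fx Gx ABx at h
  exact h
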